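/- For every n ≥ 1, Player O wins the delay game Γ_f(P_n) for the constant delay function f with f(0) = 2^n + 1, where P_n ⊆ (Σ_n × Σ_n)^ω contains a word (α, β) if and only if the suffix α(1)α(2)⋯ contains a bad β(0)-pair. -/

import Mathlib

universe u

namespace DelayGames

/-- A delay function maps each round to a positive number of letters. -/
def IsDelay (f : ℕ → ℕ) : Prop := ∀ i, 1 ≤ f i

/-- A delay function is constant if it is `1` from round `1` on. -/
def IsConstantDelay (f : ℕ → ℕ) : Prop := ∀ i, 0 < i → f i = 1

/-- `α` is the flattening (concatenation) of the sequence of finite blocks `u`: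
every finite concatenation of the first `i` blocks is the corresponding prefix of `α`. -/
def Flattens {σ : Type*} (u : ℕ → List σ) (α : ℕ → σ) : Prop :=
  ∀ i, (List.range i).flatMap u =
    (List.range ((List.range i).flatMap u).length).map α

/-- Player O wins the delay game with delay function `f` and winning condition `L`:
she has a strategy (mapping the input letters produced so far to an output letter)
such that every consistent play has its outcome in `L`. -/
def OWins {σI σO : Type*} (f : ℕ → ℕ) (L : Set (ℕ → σI × σO)) : Prop :=
  ∃ τO : List σI → σO,
    ∀ (u : ℕ → List σI) (v : ℕ → σO),
      (∀ i, (u i).length = f i) →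
      (∀ i, v i = τO ((List.range (i + 1)).flatMap u)) →
      ∀ α : ℕ → σI, Flattens u α → (fun n => (α n, v n)) ∈ L

/-- Player I wins the delay game with delay function `f` and winning condition `L`:
he has a strategy (mapping the output letters produced so far to a block of input
letters of the prescribed length) such that no consistent play has its outcome in `L`. -/
def IWins {σI σO : Type*} (f : ℕ → ℕ) (L : Set (ℕ → σI × σO)) : Prop :=
  ∃ τI : List σO → List σI,
    (∀ w, (τI w).length = f w.length) ∧
    ∀ (u : ℕ → List σI) (v : ℕ → σO),
      (∀ i, u i = τI ((List.range i).map v)) →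
      ∀ α : ℕ → σI, Flattens u α → (fun n => (α n, v n)) ∉ L

/-- A deterministic weak Muller automaton (state type `Q`, alphabet `σ`). -/
structure WDMA (Q σ : Type*) where
  init : Q
  step : Q → σ → Q
  acc : Set (Set Q)

/-- The unique run of a deterministic automaton on an infinite word. -/
def WDMA.run {Q σ : Type*} (A : WDMA Q σ) (α : ℕ → σ) : ℕ → Q
  | 0 => A.init
  | n + 1 => A.step (WDMA.run A α n) (α n)

/-- A wDMA accepts iff the occurrence set of the run is in the acceptance family. -/
def WDMA.language {Q σ : Type*} (A : WDMA Q σ) : Set (ℕ → σ) :=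
  {α | Set.range (A.run α) ∈ A.acc}

/-- A non-deterministic weak Muller automaton. -/
structure WNMA (Q σ : Type*) where
  init : Q
  trans : Set (Q × σ × Q)
  acc : Set (Set Q)

/-- A wNMA accepts iff some initial run processing the word has its occurrence set
in the acceptance family. -/
def WNMA.language {Q σ : Type*} (A : WNMA Q σ) : Set (ℕ → σ) :=
  {α | ∃ ρ : ℕ → Q, ρ 0 = A.init ∧
    (∀ n, (ρ n, α n, ρ (n + 1)) ∈ A.trans) ∧ Set.range ρ ∈ A.acc}

/-- Boolean formulas over variables in `Q` (Emerson-Lei conditions). -/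
inductive BForm (Q : Type u) : Type u where
  | var : Q → BForm Q
  | not : BForm Q → BForm Q
  | and : BForm Q → BForm Q → BForm Q
  | or : BForm Q → BForm Q → BForm Q

/-- Evaluation of a Boolean formula under a valuation. -/
def BForm.eval {Q : Type*} (v : Q → Prop) : BForm Q → Prop
  | .var q => v q
  | .not φ => ¬ BForm.eval v φ
  | .and φ ψ => BForm.eval v φ ∧ BForm.eval v ψ
  | .or φ ψ => BForm.eval v φ ∨ BForm.eval v ψ

/-- The length of a Boolean formula. -/
def BForm.size {Q : Type*} : BForm Q → ℕ
  | .var _ => 1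
  | .not φ => BForm.size φ + 1
  | .and φ ψ => BForm.size φ + BForm.size ψ + 1
  | .or φ ψ => BForm.size φ + BForm.size ψ + 1

/-- The family `𝓕_φ` of sets of states whose characteristic valuation satisfies `φ`. -/
def BForm.models {Q : Type*} (φ : BForm Q) : Set (Set Q) :=
  {F | BForm.eval (fun q => q ∈ F) φ}

/-- The set of states visited infinitely often by a run. -/
def InfOcc {Q : Type*} (ρ : ℕ → Q) : Set Q := {q | ∀ N, ∃ n, N ≤ n ∧ ρ n = q}

/-- A deterministic parity automaton. -/
structure DPA (Q σ : Type*) where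
  init : Q
  step : Q → σ → Q
  color : Q → ℕ

def DPA.run {Q σ : Type*} (A : DPA Q σ) (α : ℕ → σ) : ℕ → Q
  | 0 => A.init
  | n + 1 => A.step (DPA.run A α n) (α n)

/-- A DPA accepts iff the maximal color visited infinitely often by the run is even. -/
def DPA.language {Q σ : Type*} (A : DPA Q σ) : Set (ℕ → σ) :=
  {α | ∃ q ∈ InfOcc (A.run α), Even (A.color q) ∧
    ∀ q' ∈ InfOcc (A.run α), A.color q' ≤ A.color q}

/-- A non-deterministic parity automaton. -/
structure NPA (Q σ : Type*) where
  init : Q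
  trans : Set (Q × σ × Q)
  color : Q → ℕ

/-- An NPA accepts iff some initial run processing the word is such that the maximal
color it visits infinitely often is even. -/
def NPA.language {Q σ : Type*} (A : NPA Q σ) : Set (ℕ → σ) :=
  {α | ∃ ρ : ℕ → Q, ρ 0 = A.init ∧
    (∀ n, (ρ n, α n, ρ (n + 1)) ∈ A.trans) ∧
    ∃ q ∈ InfOcc ρ, Even (A.color q) ∧ ∀ q' ∈ InfOcc ρ, A.color q' ≤ A.color q}

/-- A finite word contains a bad `j`-pair. -/
def ListBadPair (w : List ℕ) (j : ℕ) : Prop :=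
  ∃ p p', p < p' ∧ p' < w.length ∧ w.getD p 0 = j ∧ w.getD p' 0 = j ∧
    ∀ q, p < q → q < p' → w.getD q 0 < j

/-- An infinite word contains a bad `j`-pair. -/
def InfBadPair (α : ℕ → ℕ) (j : ℕ) : Prop :=
  ∃ p p', p < p' ∧ α p = j ∧ α p' = j ∧ ∀ q, p < q → q < p' → α q < j

/-- The winning condition `P_n`: `(α, β)` belongs to it iff `α(1)α(2)⋯` contains a
bad `β(0)`-pair. -/
def P (n : ℕ) : Set (ℕ → Fin n × Fin n) :=
  {w | InfBadPair (fun k => ((w (k + 1)).1 : ℕ)) ((w 0).2 : ℕ)}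

/-- The `k`-th bit of the binary representation of `x`. -/
def bit (x k : ℕ) : ℕ := x / 2 ^ k % 2


lemma badPair_of_take {w : List ℕ} {m j : ℕ} (h : ListBadPair (w.take m) j) :
    ListBadPair w j := by
  obtain ⟨p, p', h1, h2, h3, h4, h5⟩ := h
  have hm : ∀ q, q < (w.take m).length → (w.take m).getD q 0 = w.getD q 0 := by
    intro q hq
    rw [List.length_take] at hq
    simp [List.getD_eq_getElem?_getD, List.getElem?_take, lt_min_iff.mp hq |>.1]
  refine ⟨p, p', h1, lt_of_lt_of_le h2 (by simp [List.length_take]), ?_, ?_, ?_⟩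
  · rw [← hm p (by omega)]; exact h3
  · rw [← hm p' h2]; exact h4
  · intro q hq1 hq2; rw [← hm q (by omega)]; exact h5 q hq1 hq2

lemma badPair_of_drop {w : List ℕ} {m j : ℕ} (h : ListBadPair (w.drop m) j) :
    ListBadPair w j := by
  obtain ⟨p, p', h1, h2, h3, h4, h5⟩ := h
  have hm : ∀ q, (w.drop m).getD q 0 = w.getD (m + q) 0 := by
    intro q; simp [List.getD_eq_getElem?_getD, List.getElem?_drop]
  rw [List.length_drop] at h2
  refine ⟨m + p, m + p', by omega, by omega, ?_, ?_, ?_⟩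
  · rw [← hm p]; exact h3
  · rw [← hm p']; exact h4
  · intro q hq1 hq2
    have : q = m + (q - m) := by omega
    rw [this, ← hm]; exact h5 _ (by omega) (by omega)

lemma noBad_length_lt : ∀ (n : ℕ) (w : List ℕ), (∀ x ∈ w, x < n) →
    (∀ j, ¬ ListBadPair w j) → w.length < 2 ^ n := by
  intro n
  induction n with
  | zero =>
    intro w hlt _
    match w with
    | [] => simp
    | x :: _ => exact absurd (hlt x (by simp)) (by omega)
  | succ n ih =>
    intro w hlt hnb
    have hg : ∀ q (h : q < w.length), w.getD q 0 = w[q] := fun q h => List.getD_eq_getElem w 0 h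
    by_cases hn : n ∈ w
    · -- first occurrence
      obtain ⟨i0, hi0, hgi0⟩ := List.mem_iff_getElem.mp hn
      have hex : ∃ q, q < w.length ∧ w.getD q 0 = n := ⟨i0, hi0, by rw [hg _ hi0]; exact hgi0⟩
      let i := Nat.find hex
      have hi := Nat.find_spec hex
      have himin : ∀ q < i, ¬(q < w.length ∧ w.getD q 0 = n) := fun q hq => Nat.find_min hex hq
      -- no second occurrence
      have hsecond : ∀ q, i < q → q < w.length → w.getD q 0 ≠ n := by
        intro q hq1 hq2 hq3
        have hex2 : ∃ k, i < k ∧ k < w.length ∧ w.getD k 0 = n := ⟨q, hq1, hq2, hq3⟩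
        have hk := Nat.find_spec hex2
        apply hnb n
        refine ⟨i, Nat.find hex2, hk.1, hk.2.1, hi.2, hk.2.2, ?_⟩
        intro r hr1 hr2
        have hrn : ¬(i < r ∧ r < w.length ∧ w.getD r 0 = n) := Nat.find_min hex2 hr2
        have hrlen : r < w.length := by omega
        have : w.getD r 0 ≠ n := by tauto
        have : w.getD r 0 < n + 1 := by rw [hg r hrlen]; exact hlt _ (List.getElem_mem hrlen)
        omega
      -- take i and drop (i+1)
      have h1 : (w.take i).length < 2 ^ n := by
        apply ih
        · intro x hx
          obtain ⟨q, hq, hxq⟩ := List.mem_iff_getElem.mp hx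
          rw [List.length_take] at hq
          have hq' : q < i := by omega
          have hqlen : q < w.length := by omega
          have : (w.take i)[q] = w[q] := List.getElem_take
          have hne := himin q hq'
          have : x < n + 1 := by subst hxq; rw [this]; exact hlt _ (List.getElem_mem hqlen)
          have : x ≠ n := by
            intro hxn
            exact hne ⟨hqlen, by rw [hg q hqlen, ← ‹(w.take i)[q] = w[q]›, hxq, hxn]⟩
          omega
        · intro j hj; exact hnb j (badPair_of_take hj)
      have h2 : (w.drop (i+1)).length < 2 ^ n := by
        apply ih
        · intro x hx
          obtain ⟨q, hq, hxq⟩ := List.mem_iff_getElem.mp hx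
          rw [List.length_drop] at hq
          have hqlen : i + 1 + q < w.length := by omega
          have hget : (w.drop (i+1))[q] = w[i+1+q] := List.getElem_drop
          have : x < n + 1 := by subst hxq; rw [hget]; exact hlt _ (List.getElem_mem hqlen)
          have : x ≠ n := by
            intro hxn
            exact hsecond (i+1+q) (by omega) hqlen (by rw [hg _ hqlen, ← hget, hxq, hxn])
          omega
        · intro j hj; exact hnb j (badPair_of_drop hj)
      rw [List.length_take] at h1
      rw [List.length_drop] at h2
      have hp : (2:ℕ) ^ (n+1) = 2 ^ n + 2 ^ n := by ring
      have := hi.1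
      omega
    · have : w.length < 2 ^ n := by
        apply ih
        · intro x hx
          have h1 : x < n + 1 := hlt x hx
          have : x ≠ n := fun h => hn (h ▸ hx)
          omega
        · exact hnb
      have : (2:ℕ) ^ n < 2 ^ (n+1) := by
        have : (2:ℕ)^(n+1) = 2^n + 2^n := by ring
        have := Nat.pow_pos (n := n) (by norm_num : 0 < 2)
        omega
      omega

lemma exists_bad {n : ℕ} {w : List ℕ} (hlt : ∀ x ∈ w, x < n) (hlen : 2 ^ n ≤ w.length) :
    ∃ j, j < n ∧ ListBadPair w j := by
  by_contra h
  push_neg at h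
  have : ∀ j, ¬ ListBadPair w j := by
    intro j hj
    obtain ⟨p, p', h1, h2, h3, h4, h5⟩ := hj
    have hp : p < w.length := by omega
    have : j < n := by
      rw [List.getD_eq_getElem w 0 hp] at h3
      exact h3 ▸ hlt _ (List.getElem_mem hp)
    exact h j this ⟨p, p', h1, h2, h3, h4, h5⟩
  exact absurd (noBad_length_lt n w hlt this) (by omega)

/-- Player O wins the delay game with winning condition `P n` for the
constant delay function with `f 0 = 2 ^ n + 1`. -/
theorem OWins_P_with_exponential_lookahead :
    ∀ n : ℕ, 1 ≤ n →
      OWins (fun i => if i = 0 then 2 ^ n + 1 else 1) (P n) := by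
  intro n hn
  classical
  refine ⟨fun l => if h : ∃ j : Fin n, ListBadPair ((l.drop 1).map Fin.val) (j : ℕ)
      then h.choose else ⟨0, hn⟩, ?_⟩
  intro u v hlen hv α hflat
  -- u 0 is determined by α
  have hflat1 := hflat 1
  have hu0 : (List.range 1).flatMap u = u 0 := by
    show ([0] : List ℕ).flatMap u = u 0
    rw [List.flatMap_cons, List.flatMap_nil, List.append_nil]
  rw [hu0] at hflat1
  have hlen0 : (u 0).length = 2 ^ n + 1 := hlen 0
  set L : List ℕ := ((u 0).drop 1).map Fin.val with hL
  have hLlen : L.length = 2 ^ n := by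
    rw [hL, List.length_map, List.length_drop, hlen0]
    exact Nat.add_sub_cancel _ _
  have hLget : ∀ q, q < 2 ^ n → L.getD q 0 = (α (q + 1) : ℕ) := by
    intro q hq
    have hq1 : q + 1 < (u 0).length := by omega
    have hqL : q < L.length := by omega
    have h1 : L[q] = ((u 0)[q+1]'hq1 : Fin n).val := by
      simp [hL, List.getElem_drop]
    have h2 : (u 0)[q+1]'hq1 = α (q+1) := by
      rw [List.getElem_eq_iff]
      conv_lhs => rw [hflat1]
      simp only [List.getElem?_map, hlen0]
      rw [List.getElem?_range (by omega : q + 1 < 2 ^ n + 1)]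
      rfl
    rw [List.getD_eq_getElem L 0 hqL, h1, h2]
  have hex : ∃ j : Fin n, ListBadPair L (j : ℕ) := by
    obtain ⟨j, hj, hbad⟩ := exists_bad (w := L) (n := n)
      (by intro x hx; rw [hL, List.mem_map] at hx; obtain ⟨a, _, rfl⟩ := hx; exact a.isLt)
      (by omega)
    exact ⟨⟨j, hj⟩, hbad⟩
  have hv0 : v 0 = hex.choose := by
    rw [hv 0, hu0]
    exact dif_pos hex
  have hbad := hex.choose_spec
  obtain ⟨p, p', h1, h2, h3, h4, h5⟩ := hbad
  rw [hLlen] at h2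
  show InfBadPair (fun k => (α (k+1) : ℕ)) ((v 0 : Fin n) : ℕ)
  rw [hv0]
  refine ⟨p, p', h1, ?_, ?_, ?_⟩
  · show ((α (p+1) : Fin n) : ℕ) = _
    rw [← hLget p (by omega)]; exact h3
  · show ((α (p'+1) : Fin n) : ℕ) = _
    rw [← hLget p' h2]; exact h4
  · intro q hq1 hq2
    show ((α (q+1) : Fin n) : ℕ) < _
    rw [← hLget q (by omega)]; exact h5 q hq1 hq2

end DelayGames
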